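/- Let g(x) = ax² + bx + c with a ≠ 0, and let x, y, z be pairwise distinct reals with g(x) = y, g(y) = z, g(z) = x. Set p = y − x and r = (z−y)/(y−x). Then p = −(r²+r+1)/(a·r·(r+1)), x = −b/(2a) + (r³+2r²+r+1)/(2a·r·(r+1)), and r is a root of P_δ(X) = X⁶ + 2X⁵ − (δ+3)X⁴ − 2(δ+3)X³ + (2−δ)X² + 4X + 1, where δ = b² − 4ac − 2b − 7. -/

import Mathlib

def Ppoly (α X : ℝ) : ℝ :=
  X ^ 6 + 2 * X ^ 5 - (α + 3) * X ^ 4 - 2 * (α + 3) * X ^ 3 + (2 - α) * X ^ 2 + 4 * X + 1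

theorem stmt8 (a b c x y z : ℝ) (ha : a ≠ 0)
    (hxy : x ≠ y) (hyz : y ≠ z) (hxz : x ≠ z)
    (h1 : a * x ^ 2 + b * x + c = y)
    (h2 : a * y ^ 2 + b * y + c = z)
    (h3 : a * z ^ 2 + b * z + c = x) :
    let p := y - x
    let r := (z - y) / (y - x)
    let δ := b ^ 2 - 4 * a * c - 2 * b - 7
    p = -(r ^ 2 + r + 1) / (a * r * (r + 1)) ∧
    x = -b / (2 * a) + (r ^ 3 + 2 * r ^ 2 + r + 1) / (2 * a * r * (r + 1)) ∧
    Ppoly δ r = 0 := by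
  intro p r δ
  have hp : y - x ≠ 0 := sub_ne_zero.mpr hxy.symm
  have hq : z - y ≠ 0 := sub_ne_zero.mpr hyz.symm
  have hzx : z - x ≠ 0 := sub_ne_zero.mpr hxz.symm
  have hpq : (y - x) + (z - y) ≠ 0 := by
    have : (y - x) + (z - y) = z - x := by ring
    rw [this]; exact hzx
  have hG1 : a * (y - x) * (z - y) * ((y - x) + (z - y))
      + ((z - y) ^ 2 + (z - y) * (y - x) + (y - x) ^ 2) = 0 := by
    linear_combination (y - x) * (h3 - h2) - (z - y) * (h2 - h1)
  have hG2 : (2 * a * x + b) * ((y - x) * (z - y) * ((y - x) + (z - y)))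
      = (z - y) ^ 3 + 2 * (z - y) ^ 2 * (y - x) + (z - y) * (y - x) ^ 2 + (y - x) ^ 3 := by
    linear_combination (z - y) * ((y - x) + (z - y)) * (h2 - h1)
      + (y - x) * (z - y) * (h3 - h1) - (y - x) * ((y - x) + (z - y)) * (h3 - h2)
  have hGB : (2 * a * y + b) * ((y - x) * (z - y) * ((y - x) + (z - y)))
      = (z - y) ^ 3 - (y - x) ^ 2 * (z - y) - (y - x) ^ 3 := by
    linear_combination (z - y) * ((y - x) + (z - y)) * (h2 - h1)
      + (y - x) * ((y - x) + (z - y)) * (h3 - h2) - (y - x) * (z - y) * (h3 - h1)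
  have hK : (2 * a * x + b) ^ 2 = 2 * (2 * a * y + b) + (b ^ 2 - 4 * a * c - 2 * b) := by
    linear_combination 4 * a * h1
  have hG3 : ((z - y) ^ 3 + 2 * (z - y) ^ 2 * (y - x) + (z - y) * (y - x) ^ 2 + (y - x) ^ 3) ^ 2
      = 2 * ((z - y) ^ 3 - (y - x) ^ 2 * (z - y) - (y - x) ^ 3)
          * ((y - x) * (z - y) * ((y - x) + (z - y)))
        + (b ^ 2 - 4 * a * c - 2 * b)
          * ((y - x) * (z - y) * ((y - x) + (z - y))) ^ 2 := by
    linear_combination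
      (-(((z - y) ^ 3 + 2 * (z - y) ^ 2 * (y - x) + (z - y) * (y - x) ^ 2 + (y - x) ^ 3)
          + (2 * a * x + b) * ((y - x) * (z - y) * ((y - x) + (z - y))))) * hG2
        + ((y - x) * (z - y) * ((y - x) + (z - y))) ^ 2 * hK
        + 2 * ((y - x) * (z - y) * ((y - x) + (z - y))) * hGB
  have hr : r = (z - y) / (y - x) := rfl
  have hr0 : r ≠ 0 := div_ne_zero hq hp
  have hr1 : r + 1 ≠ 0 := by
    rw [hr, div_add' _ _ _ hp]
    refine div_ne_zero (fun h => hpq ?_) hp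
    linarith
  have hpq2 : z - y + (y - x) ≠ 0 := by rwa [add_comm]
  refine ⟨?_, ?_, ?_⟩
  · show y - x = -(r ^ 2 + r + 1) / (a * r * (r + 1))
    rw [hr]
    field_simp
    linear_combination hG1
  · show x = -b / (2 * a) + (r ^ 3 + 2 * r ^ 2 + r + 1) / (2 * a * r * (r + 1))
    rw [hr]
    field_simp
    linear_combination hG2
  · show Ppoly (b ^ 2 - 4 * a * c - 2 * b - 7) ((z - y) / (y - x)) = 0
    unfold Ppoly
    field_simp
    linear_combination hG3
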